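/- Let H be an N×N Hermitian complex matrix with an orthonormal eigenbasis {v_m} and corresponding real eigenvalues {E_m}, let O be an N×N positive semidefinite complex matrix, let β ≥ 0, E ∈ ℝ and Δ > 0. Then Σ_{m : E_m ∈ (E−Δ, E]} ⟨v_m, O v_m⟩ ≤ e^{βE} · tr(e^{−βH} O). Equivalently, if N_{E,Δ} = #{m : E_m ∈ (E−Δ,E]} ≥ 1, the microcanonical average of O over the shell is at most (Z_β e^{βE}/N_{E,Δ}) times the canonical average tr(e^{−βH}O)/Z_β. -/

import Mathlib

open scoped Matrix ComplexOrder

/-- inequality (S.45): for a Hermitian `H` with orthonormal eigenbasis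
`{v m}` and eigenvalues `{Em m}`, a positive semidefinite `O`, `β ≥ 0`, `E ∈ ℝ` and
`Δ > 0`, the sum of eigenstate expectation values of `O` over the energy shell `(E-Δ, E]`
is at most `e^{βE} · tr(e^{-βH} O)`. -/
theorem shell_sum_le_exp_trace
    (N : ℕ) (H : Matrix (Fin N) (Fin N) ℂ) (hH : H.IsHermitian)
    (v : Fin N → Fin N → ℂ) (Em : Fin N → ℝ)
    (honb : ∀ m m', star (v m) ⬝ᵥ v m' = if m = m' then 1 else 0)
    (heig : ∀ m, H.mulVec (v m) = Em m • v m)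
    (O : Matrix (Fin N) (Fin N) ℂ) (hO : O.PosSemidef)
    (β E Δ : ℝ) (hβ : 0 ≤ β) (hΔ : 0 < Δ) :
    ∑ m ∈ Finset.univ.filter (fun m => E - Δ < Em m ∧ Em m ≤ E),
        (star (v m) ⬝ᵥ O.mulVec (v m)).re
      ≤ Real.exp (β * E) * ((NormedSpace.exp ((-(β : ℂ)) • H) * O).trace).re := by
  classical
  set U : Matrix (Fin N) (Fin N) ℂ := Matrix.of (fun i m => v m i) with hUdef
  have hUU : Uᴴ * U = 1 := by
    ext m m'
    have := honb m m'
    simpa [Matrix.mul_apply, Matrix.conjTranspose_apply, Matrix.one_apply, dotProduct,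
      hUdef] using this
  have hUU' : U * Uᴴ = 1 := mul_eq_one_comm.mp hUU
  have hUunit : IsUnit U := ⟨⟨U, Uᴴ, hUU', hUU⟩, rfl⟩
  have hUinv : U⁻¹ = Uᴴ := Matrix.inv_eq_right_inv hUU'
  set D : Matrix (Fin N) (Fin N) ℂ := Matrix.diagonal (fun m => (-β * Em m : ℂ)) with hDdef
  have hHU : ((-(β : ℂ)) • H) * U = U * D := by
    ext i m
    have h1 : (H * U) i m = H.mulVec (v m) i := by
      simp [Matrix.mul_apply, Matrix.mulVec, dotProduct, hUdef]
    have h2 : (H * U) i m = (Em m : ℂ) * v m i := by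
      rw [h1, heig m]; simp
    rw [Matrix.smul_mul, Matrix.smul_apply, h2, hDdef, Matrix.mul_diagonal]
    simp only [hUdef, Matrix.of_apply, smul_eq_mul]
    ring
  have hconj : (-(β : ℂ)) • H = U * D * U⁻¹ := by
    rw [hUinv]
    calc (-(β : ℂ)) • H = ((-(β : ℂ)) • H) * (U * Uᴴ) := by rw [hUU', mul_one]
    _ = (((-(β : ℂ)) • H) * U) * Uᴴ := by rw [mul_assoc]
    _ = U * D * Uᴴ := by rw [hHU]
  have hexp : NormedSpace.exp ((-(β : ℂ)) • H)
      = U * Matrix.diagonal (fun m => ((Real.exp (-β * Em m) : ℝ) : ℂ)) * Uᴴ := by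
    rw [hconj, Matrix.exp_conj U D hUunit, hUinv, hDdef, Matrix.exp_diagonal]
    rw [Pi.exp_def]
    congr 2 with m
    simp only [Matrix.diagonal_apply]
    split
    · rw [← Complex.exp_eq_exp_ℂ, Complex.ofReal_exp]
      norm_cast
    · rfl
  set d : Fin N → ℝ := fun m => Real.exp (-β * Em m) with hddef
  set c : Fin N → ℂ := fun m => star (v m) ⬝ᵥ O.mulVec (v m) with hcdef
  have hM : ∀ m, (Uᴴ * O * U) m m = c m := by
    intro m
    simp only [hcdef, Matrix.mul_apply, Matrix.conjTranspose_apply, hUdef, Matrix.of_apply,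
      dotProduct, Matrix.mulVec, Pi.star_apply, Finset.sum_mul, Finset.mul_sum]
    rw [Finset.sum_comm]
    exact Finset.sum_congr rfl fun i _ => Finset.sum_congr rfl fun j _ => by ring
  have htr : (NormedSpace.exp ((-(β : ℂ)) • H) * O).trace
      = ∑ m, ((d m : ℂ)) * c m := by
    rw [hexp]
    have e1 : U * Matrix.diagonal (fun m => ((d m : ℝ) : ℂ)) * Uᴴ * O
        = U * (Matrix.diagonal (fun m => ((d m : ℝ) : ℂ)) * (Uᴴ * O)) := by
      rw [mul_assoc, mul_assoc]
    rw [e1, Matrix.trace_mul_comm]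
    have e2 : Matrix.diagonal (fun m => ((d m : ℝ) : ℂ)) * (Uᴴ * O) * U
        = Matrix.diagonal (fun m => ((d m : ℝ) : ℂ)) * (Uᴴ * O * U) := by
      rw [mul_assoc]
    rw [e2]
    simp only [Matrix.trace, Matrix.diag_apply, Matrix.diagonal_mul]
    exact Finset.sum_congr rfl fun m _ => by rw [hM m]
  have hcre : ∀ m, 0 ≤ (c m).re := by
    intro m
    have := hO.dotProduct_mulVec_nonneg (v m)
    exact (Complex.le_def.mp this).1
  have hre : ((NormedSpace.exp ((-(β : ℂ)) • H) * O).trace).re = ∑ m, d m * (c m).re := by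
    rw [htr, Complex.re_sum]
    exact Finset.sum_congr rfl fun m _ => by rw [Complex.re_ofReal_mul]
  rw [hre, Finset.mul_sum]
  calc ∑ m ∈ Finset.univ.filter (fun m => E - Δ < Em m ∧ Em m ≤ E), (c m).re
      ≤ ∑ m ∈ Finset.univ.filter (fun m => E - Δ < Em m ∧ Em m ≤ E),
          Real.exp (β * E) * (d m * (c m).re) := by
        apply Finset.sum_le_sum
        intro m hm
        have hmE : Em m ≤ E := (Finset.mem_filter.mp hm).2.2
        have h1 : (1 : ℝ) ≤ Real.exp (β * E) * d m := by
          rw [hddef]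
          rw [← Real.exp_add]
          apply Real.one_le_exp
          nlinarith
        calc (c m).re = 1 * (c m).re := (one_mul _).symm
        _ ≤ (Real.exp (β * E) * d m) * (c m).re :=
            mul_le_mul_of_nonneg_right h1 (hcre m)
        _ = Real.exp (β * E) * (d m * (c m).re) := by ring
    _ ≤ ∑ m, Real.exp (β * E) * (d m * (c m).re) := by
        apply Finset.sum_le_sum_of_subset_of_nonneg (Finset.filter_subset _ _)
        intro m _ _
        exact mul_nonneg (Real.exp_pos _).le (mul_nonneg (Real.exp_pos _).le (hcre m))
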